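/- If r ≥ 1 and √r < d ≤ r/2 are integers, then β_r(d) > e^{r·H(d/r) − 2(r/d)·ln r}, where H(x) = −x ln x − (1−x) ln(1−x) is the entropy function. Consequently, if d/√r → ∞ and d ≤ r/2, then β_r(d) > C(r,d)^{1+o(1)}. -/

import Mathlib

/-- A subset `C` of `F_2^r` is `d`-complete if through every point `v` there is a
`d`-flat contained in `C ∪ {v}`; i.e. there is a `d`-dimensional subspace `L`
with `v + (L \ {0}) ⊆ C`. -/
def KakeyaComplete (r d : ℕ) (C : Set (Fin r → ZMod 2)) : Prop :=
  ∀ v : Fin r → ZMod 2, ∃ L : Submodule (ZMod 2) (Fin r → ZMod 2),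
    Module.finrank (ZMod 2) L = d ∧ ∀ x ∈ L, x ≠ 0 → v + x ∈ C

/-- `gamma r d` is the smallest size of a `d`-complete subset of `F_2^r`. -/
noncomputable def gamma (r d : ℕ) : ℕ :=
  sInf {n | ∃ C : Finset (Fin r → ZMod 2), C.card = n ∧ KakeyaComplete r d ↑C}

/-- A subset `B` of `F_2^r` is `d`-non-blocking if for every `v` there is a
subspace `L` of dimension `r - d` (codimension `d`) with `(v + (L \ {0})) ∩ B = ∅`. -/
def KakeyaNonBlocking (r d : ℕ) (B : Set (Fin r → ZMod 2)) : Prop :=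
  ∀ v : Fin r → ZMod 2, ∃ L : Submodule (ZMod 2) (Fin r → ZMod 2),
    Module.finrank (ZMod 2) L = r - d ∧ ∀ x ∈ L, x ≠ 0 → v + x ∉ B

/-- `beta r d` is the largest size of a `d`-non-blocking subset of `F_2^r`. -/
noncomputable def beta (r d : ℕ) : ℕ :=
  sSup {n | ∃ B : Finset (Fin r → ZMod 2), B.card = n ∧ KakeyaNonBlocking r d ↑B}

section BetaProof
open Finset


private def fterm (r d i : ℕ) : ℕ := r.choose i * d^i * (r-d)^(r-i)

private lemma fterm_up {r d : ℕ} (hdr : 2*d ≤ r) {i : ℕ} (hi : i < d) :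
    fterm r d i ≤ fterm r d (i+1) := by
  have key : r.choose i * (r-d) ≤ r.choose (i+1) * d := by
    have h1 : r.choose (i+1) * (i+1) = r.choose i * (r - i) := Nat.choose_succ_right_eq r i
    have h3 : r.choose i * (r-d) * (i+1) ≤ r.choose (i+1) * d * (i+1) := by
      calc r.choose i * (r-d) * (i+1) = r.choose i * ((r-d)*(i+1)) := by ring
        _ ≤ r.choose i * ((r-i)*d) := Nat.mul_le_mul_left _ (Nat.mul_le_mul (by omega) (by omega))
        _ = r.choose i * (r-i) * d := by ring
        _ = r.choose (i+1) * (i+1) * d := by rw [h1]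
        _ = r.choose (i+1) * d * (i+1) := by ring
    exact Nat.le_of_mul_le_mul_right h3 (by omega)
  have hsplit : r - i = (r - (i+1)) + 1 := by omega
  calc fterm r d i = (r.choose i * (r-d)) * (d^i * (r-d)^(r-(i+1))) := by
        unfold fterm; rw [hsplit]; ring
    _ ≤ (r.choose (i+1) * d) * (d^i * (r-d)^(r-(i+1))) := Nat.mul_le_mul_right _ key
    _ = fterm r d (i+1) := by unfold fterm; ring

private lemma fterm_down {r d : ℕ} (hdr : 2*d ≤ r) {i : ℕ} (hi₁ : d ≤ i) (hi₂ : i < r) :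
    fterm r d (i+1) ≤ fterm r d i := by
  have key : r.choose (i+1) * d ≤ r.choose i * (r-d) := by
    have h1 : r.choose (i+1) * (i+1) = r.choose i * (r - i) := Nat.choose_succ_right_eq r i
    have h3 : r.choose (i+1) * d * (i+1) ≤ r.choose i * (r-d) * (i+1) := by
      calc r.choose (i+1) * d * (i+1) = r.choose (i+1) * (i+1) * d := by ring
        _ = r.choose i * (r-i) * d := by rw [h1]
        _ = r.choose i * ((r-i) * d) := by ring
        _ ≤ r.choose i * ((r-d)*(i+1)) := Nat.mul_le_mul_left _ (Nat.mul_le_mul (by omega) (by omega))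
        _ = r.choose i * (r-d) * (i+1) := by ring
    exact Nat.le_of_mul_le_mul_right h3 (by omega)
  have hsplit : r - i = (r - (i+1)) + 1 := by omega
  calc fterm r d (i+1) = (r.choose (i+1) * d) * (d^i * (r-d)^(r-(i+1))) := by
        unfold fterm; ring
    _ ≤ (r.choose i * (r-d)) * (d^i * (r-d)^(r-(i+1))) := Nat.mul_le_mul_right _ key
    _ = fterm r d i := by unfold fterm; rw [hsplit]; ring

private lemma fterm_le_max {r d : ℕ} (hdr : 2*d ≤ r) :
    ∀ i, i ≤ r → fterm r d i ≤ fterm r d d := by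
  have up : ∀ m j, j + m = d → fterm r d j ≤ fterm r d d := by
    intro m
    induction m with
    | zero => intro j hj; simp [show j = d by omega]
    | succ n ih =>
      intro j hj
      exact le_trans (fterm_up hdr (by omega)) (ih (j+1) (by omega))
  have down : ∀ m j, j = d + m → j ≤ r → fterm r d j ≤ fterm r d d := by
    intro m
    induction m with
    | zero => intro j hj _; simp [hj]
    | succ n ih =>
      intro j hj hjr
      have h2 : fterm r d j ≤ fterm r d (d + n) := by
        have : j = (d + n) + 1 := by omega
        subst this
        exact fterm_down hdr (by omega) (by omega)
      exact le_trans h2 (ih _ rfl (by omega))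
  intro i hi
  rcases le_or_gt i d with h | h
  · exact up (d - i) i (by omega)
  · exact down (i - d) i (by omega) hi

private lemma sum_eq_rr {r d : ℕ} (hdr : d ≤ r) :
    ∑ i ∈ range (r+1), fterm r d i = r ^ r := by
  have h : (d + (r - d) : ℕ) ^ r = ∑ i ∈ range (r+1), d ^ i * (r-d) ^ (r-i) * (r.choose i) := add_pow d (r-d) r
  rw [Nat.add_sub_cancel' hdr] at h
  rw [h]
  exact Finset.sum_congr rfl (by intro i _; unfold fterm; ring)

/-- `r^r ≤ (r+1) * (choose-term)` : entropy lower bound for the binomial coefficient, in ℕ. -/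
private lemma rr_le_maxterm {r d : ℕ} (hd : 0 < d) (hdr : 2*d ≤ r) :
    r ^ r ≤ (r+1) * (r.choose d * d^d * (r-d)^(r-d)) := by
  have h1 : ∑ i ∈ range (r+1), fterm r d i ≤ (range (r+1)).card • fterm r d d :=
    Finset.sum_le_card_nsmul _ _ _ (fun i hi => fterm_le_max hdr i (by simpa using Nat.lt_succ_iff.mp (Finset.mem_range.mp hi)))
  rw [sum_eq_rr (by omega)] at h1
  simpa [fterm, Finset.card_range, smul_eq_mul] using h1

/-- single term ≤ sum : entropy upper bound for the binomial coefficient, in ℕ. -/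
private lemma maxterm_le_rr {r d : ℕ} (hdr : d ≤ r) :
    r.choose d * d^d * (r-d)^(r-d) ≤ r ^ r := by
  rw [← sum_eq_rr hdr]
  exact Finset.single_le_sum (f := fun i => fterm r d i) (fun i _ => Nat.zero_le _)
    (Finset.mem_range.mpr (by omega))


/-- coordinate subspace: vectors vanishing on S -/
private def coordL (r : ℕ) (S : Finset (Fin r)) : Submodule (ZMod 2) (Fin r → ZMod 2) where
  carrier := {x | ∀ i ∈ S, x i = 0}
  add_mem' := by intro a b ha hb i hi; simp [ha i hi, hb i hi]
  zero_mem' := by intro i _; rfl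
  smul_mem' := by intro c x hx i hi; simp [hx i hi]

private lemma mem_coordL {r : ℕ} {S : Finset (Fin r)} {x : Fin r → ZMod 2} :
    x ∈ coordL r S ↔ ∀ i ∈ S, x i = 0 := Iff.rfl

private noncomputable def coordLEquiv (r : ℕ) (S : Finset (Fin r)) :
    (coordL r S) ≃ₗ[ZMod 2] ({i : Fin r // i ∉ S} → ZMod 2) where
  toFun x := fun i => x.1 i.1
  map_add' := by intros; rfl
  map_smul' := by intros; rfl
  invFun g := ⟨fun i => if h : i ∈ S then 0 else g ⟨i, h⟩, by
    intro i hi; simp [hi]⟩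
  left_inv := by
    intro x
    ext i
    by_cases h : i ∈ S
    · simp [h, (x.2 i h)]
    · simp [h]
  right_inv := by
    intro g
    funext i
    simp [i.2]

private lemma finrank_coordL {r : ℕ} (S : Finset (Fin r)) :
    Module.finrank (ZMod 2) (coordL r S) = r - S.card := by
  rw [(coordLEquiv r S).finrank_eq, Module.finrank_fintype_fun_eq_card]
  simp [Fintype.card_subtype_compl, Fintype.card_coe]


private lemma zmod2_cases (x : ZMod 2) : x = 0 ∨ x = 1 := by fin_cases x; exacts [Or.inl rfl, Or.inr rfl]
private lemma zmod2_not_one {x : ZMod 2} (h : ¬ x = 1) : x = 0 := by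
  rcases zmod2_cases x with h0 | h1
  · exact h0
  · exact absurd h1 h

private def wt {r : ℕ} (u : Fin r → ZMod 2) : ℕ := (univ.filter fun i => u i = 1).card

/-- the weight-d slice has cardinality `r.choose d` -/
private lemma card_slice (r d : ℕ) :
    ((univ : Finset (Fin r → ZMod 2)).filter fun u => wt u = d).card = r.choose d := by
  have h0 : r.choose d = (powersetCard d (univ : Finset (Fin r))).card := by
    rw [card_powersetCard]; simp
  rw [h0]
  refine Finset.card_bij' (fun u _ => univ.filter fun i => u i = 1)
    (fun s _ => fun i => if i ∈ s then 1 else 0) ?hi ?hj ?li ?ri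
  case hi =>
    intro u hu
    simp only [Finset.mem_powersetCard]
    exact ⟨Finset.filter_subset _ _, by simpa [wt] using (Finset.mem_filter.mp hu).2⟩
  case hj =>
    intro s hs
    rw [Finset.mem_filter]; simp only [Finset.mem_univ, true_and, wt]
    have : (univ.filter fun i => (if i ∈ s then (1:ZMod 2) else 0) = 1) = s := by
      ext i
      by_cases h : i ∈ s <;> simp [h]
    rw [this]
    exact (Finset.mem_powersetCard.mp hs).2
  case li =>
    intro u hu
    funext i
    by_cases h : u i = 1 <;> simp [h]
    exact (zmod2_not_one h).symm
  case ri =>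
    intro s hs
    ext i
    by_cases h : i ∈ s <;> simp [h]



private def cnt (r d j : ℕ) (u : Fin r → ZMod 2) : ℕ :=
  (univ.filter fun i : Fin r => (i : ℕ) / d = j ∧ u i = 1).card

private lemma sum_cnt {r d : ℕ} (u : Fin r → ZMod 2) :
    ∑ j : Fin (r/d+1), cnt r d j.val u = wt u := by
  have key := Finset.card_eq_sum_card_fiberwise
    (f := fun i : Fin r => (⟨(i:ℕ)/d, Nat.lt_succ_of_le (Nat.div_le_div_right (le_of_lt i.2))⟩ : Fin (r/d+1)))
    (s := univ.filter fun i => u i = 1) (t := univ) (fun x _ => mem_univ _)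
  rw [wt, key]
  apply Finset.sum_congr rfl
  intro j _
  unfold cnt
  rw [Finset.filter_filter]
  congr 1
  ext i
  simp only [Finset.mem_filter, Finset.mem_univ, true_and, Fin.ext_iff, and_comm]

private lemma cnt_le_wt {r d j : ℕ} (u : Fin r → ZMod 2) : cnt r d j u ≤ wt u := by
  apply Finset.card_le_card
  intro i hi
  simp only [Finset.mem_filter] at *
  tauto

private lemma fiber_card_le {r d : ℕ} (hd : 0 < d) (j : ℕ) :
    (univ.filter fun i : Fin r => (i:ℕ)/d = j).card ≤ d := by
  have h := Finset.card_le_card_of_injOn (f := fun i : Fin r => (i : ℕ))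
    (s := univ.filter fun i : Fin r => (i:ℕ)/d = j)
    (t := Finset.Ico (j*d) (j*d+d)) ?_ ?_
  · simpa using h
  · intro i hi
    simp only [Finset.mem_coe, Finset.mem_filter, Finset.mem_univ, true_and] at hi
    have h1 : (i:ℕ)/d * d + (i:ℕ) % d = (i:ℕ) := Nat.div_add_mod' _ _
    rw [hi] at h1
    have h2 := Nat.mod_lt (i : ℕ) hd
    simp only [Finset.mem_coe, Finset.mem_Ico]
    omega
  · intro a _ b _ hab
    exact Fin.ext hab

private lemma wt_add {r : ℕ} {v x : Fin r → ZMod 2} (h : ∀ i, v i = 1 → x i = 0) :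
    wt (v + x) = wt v + wt x := by
  unfold wt
  rw [← Finset.card_union_of_disjoint]
  · congr 1
    ext i
    simp only [Finset.mem_filter, Finset.mem_univ, true_and, Finset.mem_union, Pi.add_apply]
    rcases zmod2_cases (v i) with h1 | h1 <;> rcases zmod2_cases (x i) with h2 | h2
    · simp [h1, h2]
    · simp [h1, h2]
    · simp [h1, h2]
    · have := h i h1
      rw [h2] at this
      exact absurd this one_ne_zero
  · rw [Finset.disjoint_filter]
    intro i _ h1 h2
    have := h i h1
    rw [h2] at this
    exact absurd this one_ne_zero

private lemma wt_pos {r : ℕ} {x : Fin r → ZMod 2} (hx : x ≠ 0) : 0 < wt x := by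
  unfold wt
  rw [Finset.card_pos]
  have : ∃ i, x i ≠ 0 := by
    by_contra h
    push_neg at h
    exact hx (funext fun i => h i)
  obtain ⟨i, hi⟩ := this
  have hione : x i = 1 := by
    rcases zmod2_cases (x i) with h0 | h1
    · exact absurd h0 hi
    · exact h1
  exact ⟨i, by simp [hione]⟩

private lemma exists_B (r d : ℕ) (hd : 0 < d) (hdr : 2*d ≤ r) :
    ∃ B : Finset (Fin r → ZMod 2), B.Nonempty ∧ KakeyaNonBlocking r d ↑B ∧
      r.choose d ≤ (d+1)^(r/d+1) * B.card := by
  set k := r / d with hk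
  set Φ : (Fin r → ZMod 2) → (Fin (k+1) → Fin (d+1)) :=
    fun u j => ⟨min d (cnt r d j.val u), Nat.lt_succ_of_le (min_le_left _ _)⟩ with hΦ
  set Sl := (univ : Finset (Fin r → ZMod 2)).filter (fun u => wt u = d) with hSl
  obtain ⟨y, -, hy⟩ := Finset.exists_max_image (univ : Finset (Fin (k+1) → Fin (d+1)))
    (fun y => (Sl.filter fun u => Φ u = y).card) Finset.univ_nonempty
  set B := Sl.filter (fun u => Φ u = y) with hB
  have hcard : r.choose d ≤ (d+1)^(k+1) * B.card := by
    have h1 : Sl.card = ∑ y' : Fin (k+1) → Fin (d+1), (Sl.filter fun u => Φ u = y').card :=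
      Finset.card_eq_sum_card_fiberwise (fun x _ => mem_univ _)
    have h2 : ∑ y' : Fin (k+1) → Fin (d+1), (Sl.filter fun u => Φ u = y').card
        ≤ (univ : Finset (Fin (k+1) → Fin (d+1))).card • B.card :=
      Finset.sum_le_card_nsmul _ _ _ (fun y' _ => hy y' (mem_univ _))
    have h3 : (univ : Finset (Fin (k+1) → Fin (d+1))).card = (d+1)^(k+1) := by
      simp [Finset.card_univ]
    have h4 : Sl.card = r.choose d := card_slice r d
    rw [h4] at h1
    rw [h3, smul_eq_mul] at h2
    omega
  have hpos : 0 < B.card := by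
    have hc : 0 < r.choose d := Nat.choose_pos (by omega)
    rcases Nat.eq_zero_or_pos B.card with h | h
    · rw [h, Nat.mul_zero] at hcard; omega
    · exact h
  have hmem : ∀ u ∈ B, wt u = d ∧ ∀ j : Fin (k+1), cnt r d j.val u = (y j : ℕ) := by
    intro u hu
    rw [hB, Finset.mem_filter] at hu
    obtain ⟨hus, huy⟩ := hu
    have hwt : wt u = d := (Finset.mem_filter.mp hus).2
    refine ⟨hwt, fun j => ?_⟩
    have h1 : cnt r d j.val u ≤ d := hwt ▸ cnt_le_wt u
    have h2 := congrFun huy j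
    have h3 : min d (cnt r d j.val u) = (y j : ℕ) := congrArg Fin.val h2
    rw [min_eq_right h1] at h3
    exact h3
  obtain ⟨u₀, hu₀⟩ := Finset.card_pos.mp hpos
  have hysum : ∑ j : Fin (k+1), (y j : ℕ) = d := by
    have h1 := (hmem u₀ hu₀).2
    have h2 := (hmem u₀ hu₀).1
    calc ∑ j : Fin (k+1), (y j : ℕ) = ∑ j : Fin (k+1), cnt r d j.val u₀ := by
          exact Finset.sum_congr rfl (fun j _ => (h1 j).symm)
      _ = wt u₀ := sum_cnt u₀
      _ = d := h2
  refine ⟨B, ⟨u₀, hu₀⟩, ?_, hcard⟩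
  intro v
  by_cases hv : ∀ j : Fin (k+1), cnt r d j.val v = (y j : ℕ)
  · -- v has the exact profile: use the support of v
    have hwtv : wt v = d := by
      rw [← sum_cnt v]
      calc ∑ j : Fin (r/d+1), cnt r d j.val v = ∑ j : Fin (k+1), (y j : ℕ) :=
            Finset.sum_congr rfl (fun j _ => hv j)
        _ = d := hysum
    refine ⟨coordL r (univ.filter fun i => v i = 1), ?_, ?_⟩
    · rw [finrank_coordL]
      congr 1
    · intro x hx hx0 hmem'
      rw [Finset.mem_coe, hB, Finset.mem_filter, hSl, Finset.mem_filter] at hmem'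
      have h5 : wt (v + x) = d := hmem'.1.2
      have hadd : wt (v+x) = wt v + wt x :=
        wt_add (fun i hi => hx i (by simp [hi]))
      have h6 := wt_pos hx0
      omega
  · push_neg at hv
    obtain ⟨j₀, hj₀⟩ := hv
    obtain ⟨S, hSsub, hScard⟩ := Finset.exists_superset_card_eq
      (s := univ.filter fun i : Fin r => (i:ℕ)/d = j₀.val) (n := d)
      (fiber_card_le hd j₀.val) (by simp; omega)
    refine ⟨coordL r S, by rw [finrank_coordL, hScard], ?_⟩
    intro x hx hx0 hmem'
    rw [Finset.mem_coe] at hmem'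
    have h2 := (hmem (v+x) hmem').2 j₀
    have heq : cnt r d j₀.val (v+x) = cnt r d j₀.val v := by
      unfold cnt
      congr 1
      ext i
      simp only [Finset.mem_filter, Finset.mem_univ, true_and, Pi.add_apply]
      constructor
      · rintro ⟨hi1, hi2⟩
        have hxi : x i = 0 := hx i (hSsub (by simp [hi1]))
        rw [hxi, add_zero] at hi2
        exact ⟨hi1, hi2⟩
      · rintro ⟨hi1, hi2⟩
        have hxi : x i = 0 := hx i (hSsub (by simp [hi1]))
        rw [hxi, add_zero]
        exact ⟨hi1, hi2⟩
    rw [heq] at h2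
    exact hj₀ h2

private lemma choose_le_beta (r d : ℕ) (hd : 0 < d) (hdr : 2*d ≤ r) :
    0 < beta r d ∧ r.choose d ≤ (d+1)^(r/d+1) * beta r d := by
  obtain ⟨B, hne, hnb, hcard⟩ := exists_B r d hd hdr
  have hBdd : BddAbove {n | ∃ B' : Finset (Fin r → ZMod 2), B'.card = n ∧ KakeyaNonBlocking r d ↑B'} := by
    refine ⟨2^r, ?_⟩
    rintro n ⟨B', hc, -⟩
    have h1 := Finset.card_le_univ B'
    rw [hc] at h1
    have h2 : Fintype.card (Fin r → ZMod 2) = 2^r := by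
      simp
    rw [h2] at h1
    exact h1
  have hle : B.card ≤ beta r d := le_csSup hBdd ⟨B, rfl, hnb⟩
  have hBpos : 0 < B.card := Finset.card_pos.mpr hne
  refine ⟨by omega, le_trans hcard (Nat.mul_le_mul_left _ hle)⟩

private lemma log_two_ge_half : (1/2 : ℝ) ≤ Real.log 2 := by
  have := Real.log_two_gt_d9
  linarith



private lemma size_facts {r d : ℕ} (hr : 1 ≤ r) (hd₁ : Real.sqrt r < d) (hd₂ : 2 * d ≤ r) :
    3 ≤ d ∧ 6 ≤ r ∧ r < d * d := by
  have h0 : (0:ℝ) ≤ Real.sqrt r := Real.sqrt_nonneg _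
  have hrd : (r : ℝ) < (d:ℝ) * d := by
    have h1 : Real.sqrt r * Real.sqrt r = r := Real.mul_self_sqrt (by positivity)
    nlinarith [hd₁]
  have hrdn : r < d * d := by exact_mod_cast hrd
  have hd3 : 3 ≤ d := by nlinarith
  exact ⟨hd3, by omega, hrdn⟩

private lemma exp_rH (r d : ℕ) (h1 : 0 < d) (h2 : d < r) :
    Real.exp ((r : ℝ) * (-(((d : ℝ) / r)) * Real.log ((d : ℝ) / r) -
      (1 - (d : ℝ) / r) * Real.log (1 - (d : ℝ) / r)))
    = (r:ℝ)^r / ((d:ℝ)^d * (((r-d : ℕ)):ℝ)^(r-d)) := by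
  have hr0 : 0 < r := lt_trans h1 h2
  have hR : (0:ℝ) < r := by exact_mod_cast hr0
  have hD : (0:ℝ) < d := by exact_mod_cast h1
  have hMc : ((r-d : ℕ) : ℝ) = (r:ℝ) - d := by
    push_cast [Nat.cast_sub h2.le]; ring
  have hM : (0:ℝ) < ((r-d:ℕ) : ℝ) := by
    have : 0 < r - d := by omega
    exact_mod_cast this
  have hM' : (0:ℝ) < (r:ℝ) - d := hMc ▸ hM
  have hpos : (0:ℝ) < (r:ℝ)^r / ((d:ℝ)^d * (((r-d : ℕ)):ℝ)^(r-d)) := by positivity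
  have hlog : Real.log ((r:ℝ)^r / ((d:ℝ)^d * ((r-d:ℕ):ℝ)^(r-d)))
      = (r:ℝ) * Real.log r - ((d:ℝ) * Real.log d + ((r:ℝ)-(d:ℝ)) * Real.log ((r:ℝ)-(d:ℝ))) := by
    rw [Real.log_div (pow_pos hR r).ne' (mul_pos (pow_pos hD d) (pow_pos hM (r-d))).ne']
    rw [Real.log_mul (pow_pos hD d).ne' (pow_pos hM (r-d)).ne']
    rw [Real.log_pow, Real.log_pow, Real.log_pow, hMc]
  have hexp_eq : (r : ℝ) * (-(((d : ℝ) / r)) * Real.log ((d : ℝ) / r) -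
      (1 - (d : ℝ) / r) * Real.log (1 - (d : ℝ) / r))
      = (r:ℝ) * Real.log r - ((d:ℝ) * Real.log d + ((r:ℝ)-(d:ℝ)) * Real.log ((r:ℝ)-(d:ℝ))) := by
    have e2 : (1 : ℝ) - (d:ℝ)/r = ((r:ℝ)-d)/r := by field_simp
    rw [e2, Real.log_div hD.ne' hR.ne', Real.log_div hM'.ne' hR.ne']
    field_simp
    ring
  rw [← Real.exp_log hpos]
  congr 1
  rw [hexp_eq, hlog]

set_option maxHeartbeats 1000000 in
private lemma part1 (r d : ℕ) (hr : 1 ≤ r) (hd₁ : Real.sqrt r < d) (hd₂ : 2 * d ≤ r) :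
    (Real.exp ((r : ℝ) *
        (-(((d : ℝ) / r)) * Real.log ((d : ℝ) / r) -
          (1 - (d : ℝ) / r) * Real.log (1 - (d : ℝ) / r)) -
      2 * ((r : ℝ) / d) * Real.log r) < (beta r d : ℝ)) := by
  obtain ⟨hd3, hr6, hrdd⟩ := size_facts hr hd₁ hd₂
  have hd0 : 0 < d := by omega
  have hdr : d < r := by omega
  set k := r / d with hk
  have hbeta := choose_le_beta r d hd0 hd₂
  have hR : (0:ℝ) < r := by positivity
  have hD : (0:ℝ) < d := by exact_mod_cast hd0
  have hb1 : (1:ℝ) ≤ (beta r d : ℝ) := by exact_mod_cast hbeta.1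
  have hbpos : (0:ℝ) < (beta r d : ℝ) := by linarith
  -- cast the two ℕ inequalities
  have hc1 : ((r:ℝ))^r ≤ ((r:ℝ)+1) * ((r.choose d : ℝ) * (d:ℝ)^d * ((r-d:ℕ):ℝ)^(r-d)) := by
    exact_mod_cast rr_le_maxterm hd0 hd₂
  have hc2 : (r.choose d : ℝ) ≤ ((d:ℝ)+1)^(k+1) * (beta r d : ℝ) := by
    exact_mod_cast hbeta.2
  -- the key comparison
  have hkey : ((r:ℝ)+1) * ((d:ℝ)+1)^(k+1) < Real.exp (2*((r:ℝ)/(d:ℝ))*Real.log r) := by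
    have h1 : ((d:ℝ)+1) ≤ (2/3)*(r:ℝ) := by
      have : (3 * (d+1) ≤ 2 * r) := by omega
      have := (Nat.cast_le (α := ℝ)).mpr this
      push_cast at this
      linarith
    have h2 : ((r:ℝ)+1) ≤ (7/6)*(r:ℝ) := by
      have : (6 * (r+1) ≤ 7 * r) := by omega
      have := (Nat.cast_le (α := ℝ)).mpr this
      push_cast at this
      linarith
    have h3 : ((d:ℝ)+1)^(k+1) ≤ ((2/3)*(r:ℝ))^(k+1) := by
      apply pow_le_pow_left₀ (by positivity) h1
    have h4 : ((2/3)*(r:ℝ))^(k+1) = (2/3:ℝ)^(k+1) * (r:ℝ)^(k+1) := mul_pow _ _ _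
    have hk2 : 2 ≤ k := by
      rw [hk]
      exact Nat.le_div_iff_mul_le hd0 |>.mpr (by omega)
    have h5 : ((2:ℝ)/3)^(k+1) ≤ (2/3:ℝ)^3 := by
      apply pow_le_pow_of_le_one (by norm_num) (by norm_num) (by omega)
    have hRp : (0:ℝ) < (r:ℝ)^(k+1) := by positivity
    have h6 : ((r:ℝ)+1) * ((d:ℝ)+1)^(k+1) ≤ (7/6)*(r:ℝ) * ((8/27) * (r:ℝ)^(k+1)) := by
      have h7 : ((d:ℝ)+1)^(k+1) ≤ (8/27) * (r:ℝ)^(k+1) := by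
        calc ((d:ℝ)+1)^(k+1) ≤ (2/3:ℝ)^(k+1) * (r:ℝ)^(k+1) := by rw [← h4]; exact h3
          _ ≤ (2/3:ℝ)^3 * (r:ℝ)^(k+1) := by
              apply mul_le_mul_of_nonneg_right h5 (le_of_lt hRp)
          _ = (8/27) * (r:ℝ)^(k+1) := by norm_num
      apply mul_le_mul h2 h7 (by positivity) (by positivity)
    have h8 : (7/6)*(r:ℝ) * ((8/27) * (r:ℝ)^(k+1)) = (28/81) * (r:ℝ)^(k+2) := by
      rw [pow_succ]
      ring
    have h9 : (28/81 : ℝ) * (r:ℝ)^(k+2) < (r:ℝ)^(k+2) := by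
      have : (0:ℝ) < (r:ℝ)^(k+2) := by positivity
      linarith
    have h10 : (r:ℝ)^(k+2) ≤ Real.exp (2*((r:ℝ)/(d:ℝ))*Real.log r) := by
      have hlog : (r:ℝ)^(k+2) = Real.exp (((k:ℝ)+2) * Real.log r) := by
        have hcast : ((k:ℝ)+2) = ((k+2 : ℕ):ℝ) := by push_cast; ring
        rw [hcast, ← Real.log_pow, Real.exp_log (by positivity)]
      rw [hlog]
      apply Real.exp_le_exp.mpr
      have hlogr : 0 ≤ Real.log r := Real.log_nonneg (by exact_mod_cast hr)
      have hkd : ((k:ℝ)+2) ≤ 2*((r:ℝ)/(d:ℝ)) := by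
        have h' : k * d ≤ r := by rw [hk]; exact Nat.div_mul_le_self r d
        have hn : (k+2)*d ≤ 2*r := by rw [add_mul]; omega
        have hnr : ((k:ℝ)+2)*(d:ℝ) ≤ 2*(r:ℝ) := by exact_mod_cast hn
        have he : 2*((r:ℝ)/(d:ℝ)) = (2*(r:ℝ))/(d:ℝ) := by ring
        rw [he, le_div_iff₀ hD]
        linarith
      exact mul_le_mul_of_nonneg_right hkd hlogr
    calc ((r:ℝ)+1) * ((d:ℝ)+1)^(k+1) ≤ (7/6)*(r:ℝ) * ((8/27) * (r:ℝ)^(k+1)) := h6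
      _ = (28/81) * (r:ℝ)^(k+2) := h8
      _ < (r:ℝ)^(k+2) := h9
      _ ≤ Real.exp (2*((r:ℝ)/(d:ℝ))*Real.log r) := h10
  -- assemble
  have hMpow : (0:ℝ) < (d:ℝ)^d * ((r-d:ℕ):ℝ)^(r-d) := by
    have : (0:ℝ) < ((r-d:ℕ):ℝ) := by
      have : 0 < r - d := by omega
      exact_mod_cast this
    positivity
  have hErH : Real.exp ((r : ℝ) * (-(((d : ℝ) / r)) * Real.log ((d : ℝ) / r) -
      (1 - (d : ℝ) / r) * Real.log (1 - (d : ℝ) / r)))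
      = (r:ℝ)^r / ((d:ℝ)^d * ((r-d:ℕ):ℝ)^(r-d)) := exp_rH r d hd0 hdr
  rw [Real.exp_sub, hErH, div_div, div_lt_iff₀ (by positivity)]
  have hMpos : (0:ℝ) < ((r-d:ℕ):ℝ) := by
    have : 0 < r - d := by omega
    exact_mod_cast this
  have hP : (0:ℝ) < (d:ℝ)^d * ((r-d:ℕ):ℝ)^(r-d) := by positivity
  set X := Real.exp (2*((r:ℝ)/(d:ℝ))*Real.log r) with hX
  set C := (r.choose d : ℝ) with hC
  set P := (d:ℝ)^d * ((r-d:ℕ):ℝ)^(r-d) with hPdef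
  set Q := ((d:ℝ)+1)^(k+1) with hQ
  have hQ0 : (0:ℝ) ≤ Q := by positivity
  calc (r:ℝ)^r ≤ ((r:ℝ)+1) * (C * (d:ℝ)^d * ((r-d:ℕ):ℝ)^(r-d)) := hc1
    _ = (((r:ℝ)+1) * C) * P := by rw [hPdef]; ring
    _ ≤ (((r:ℝ)+1) * (Q * (beta r d : ℝ))) * P := by
        apply mul_le_mul_of_nonneg_right _ (le_of_lt hP)
        exact mul_le_mul_of_nonneg_left hc2 (by positivity)
    _ = (((r:ℝ)+1) * Q) * (beta r d : ℝ) * P := by ring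
    _ < X * (beta r d : ℝ) * P := by
        apply mul_lt_mul_of_pos_right _ hP
        exact mul_lt_mul_of_pos_right hkey hbpos
    _ = (beta r d : ℝ) * (P * X) := by ring


private lemma rH_eq (r d : ℕ) (h1 : 0 < d) (h2 : d < r) :
    (r : ℝ) * (-(((d : ℝ) / r)) * Real.log ((d : ℝ) / r) -
      (1 - (d : ℝ) / r) * Real.log (1 - (d : ℝ) / r))
    = (r:ℝ) * Real.log r - ((d:ℝ) * Real.log d + ((r:ℝ)-(d:ℝ)) * Real.log ((r:ℝ)-(d:ℝ))) := by
  have hr0 : 0 < r := lt_trans h1 h2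
  have hR : (0:ℝ) < r := by exact_mod_cast hr0
  have hD : (0:ℝ) < d := by exact_mod_cast h1
  have hM' : (0:ℝ) < (r:ℝ) - d := by
    have : (d:ℝ) < r := by exact_mod_cast h2
    linarith
  have e2 : (1 : ℝ) - (d:ℝ)/r = ((r:ℝ)-d)/r := by field_simp
  rw [e2, Real.log_div hD.ne' hR.ne', Real.log_div hM'.ne' hR.ne']
  field_simp
  ring

private lemma star_core (ε' A R D : ℝ) (hε'0 : 0 < ε') (hA16 : 16 ≤ A) (hAε : 16 ≤ ε' * A)
    (hR1 : 1 ≤ R) (hD1 : 1 ≤ D) (h2d : 2*D ≤ R) (hd2 : A^2 * R ≤ D^2) :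
    2 * R * Real.log R ≤ ε' * (D * (Real.log R - Real.log D)) * D := by
  have hR : (0:ℝ) < R := by linarith
  have hD : (0:ℝ) < D := by linarith
  have hA0 : (0:ℝ) < A := by linarith
  have hlog2 : (0:ℝ) ≤ Real.log 2 := Real.log_nonneg one_le_two
  have hlogr0 : 0 ≤ Real.log R := Real.log_nonneg hR1
  have hL2 : Real.log 2 ≤ Real.log R - Real.log D := by
    have h := Real.log_le_log (by linarith : (0:ℝ) < 2*D) (by linarith : 2*D ≤ R)
    rw [Real.log_mul (by norm_num) hD.ne'] at h
    linarith
  have hL0 : 0 < Real.log R - Real.log D :=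
    lt_of_lt_of_le (Real.log_pos (by norm_num)) hL2
  rcases le_or_gt R (A^4) with hcase | hcase
  · have hlogA : Real.log (A^4) = 4 * Real.log A := by
      rw [Real.log_pow]; push_cast; ring
    have h4A : Real.log R ≤ 4 * A := by
      have h1 : Real.log R ≤ Real.log (A^4) := Real.log_le_log hR hcase
      have h2 : Real.log A ≤ A - 1 := Real.log_le_sub_one_of_pos hA0
      rw [hlogA] at h1
      linarith
    have h5 : 16 * A ≤ ε' * A^2 := by nlinarith [mul_le_mul_of_nonneg_right hAε hA0.le]
    have hkey1 : 2 * Real.log R ≤ ε' * A^2 * Real.log 2 := by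
      have c2a : ε' * A^2 * (1/2) ≤ ε' * A^2 * Real.log 2 :=
        mul_le_mul_of_nonneg_left log_two_ge_half (by positivity)
      linarith
    calc 2 * R * Real.log R = R * (2 * Real.log R) := by ring
      _ ≤ R * (ε' * A^2 * Real.log 2) := mul_le_mul_of_nonneg_left hkey1 hR.le
      _ = (ε' * Real.log 2) * (A^2 * R) := by ring
      _ ≤ (ε' * Real.log 2) * D^2 :=
          mul_le_mul_of_nonneg_left hd2 (mul_nonneg hε'0.le hlog2)
      _ = (ε' * D^2) * Real.log 2 := by ring
      _ ≤ (ε' * D^2) * (Real.log R - Real.log D) :=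
          mul_le_mul_of_nonneg_left hL2 (by positivity)
      _ = ε' * (D * (Real.log R - Real.log D)) * D := by ring
  · obtain ⟨t, htdef⟩ : ∃ t : ℝ, t = Real.sqrt (Real.sqrt R) := ⟨_, rfl⟩
    have hsq0 : (0:ℝ) < Real.sqrt R := Real.sqrt_pos.mpr hR
    have ht0 : 0 < t := htdef ▸ Real.sqrt_pos.mpr hsq0
    have ht4 : t^4 = R := by
      rw [htdef, show (4:ℕ) = 2*2 by rfl, pow_mul, Real.sq_sqrt (Real.sqrt_nonneg _),
        Real.sq_sqrt hR.le]
    have htA : A ≤ t := by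
      by_contra h
      push_neg at h
      have h2 : t^4 < A^4 := pow_lt_pow_left₀ h ht0.le (by norm_num)
      rw [ht4] at h2
      linarith
    have hlogr4t : Real.log R ≤ 4 * t := by
      have h1 : Real.log R = 4 * Real.log t := by
        rw [← ht4, Real.log_pow]; push_cast; ring
      have h2 : Real.log t ≤ t - 1 := Real.log_le_sub_one_of_pos ht0
      linarith
    rcases le_or_gt (D^4) (R^3) with hsub | hsub
    · have hL4 : Real.log R ≤ 4 * (Real.log R - Real.log D) := by
        have h1 : Real.log (D^4) ≤ Real.log (R^3) := Real.log_le_log (by positivity) hsub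
        rw [Real.log_pow, Real.log_pow] at h1
        push_cast at h1
        linarith
      have h5 : (8:ℝ) ≤ ε' * A^2 := by nlinarith [mul_le_mul_of_nonneg_right hAε hA0.le]
      calc 2 * R * Real.log R = (2*R) * Real.log R := by ring
        _ ≤ (2*R) * (4 * (Real.log R - Real.log D)) :=
            mul_le_mul_of_nonneg_left hL4 (by positivity)
        _ = 8 * (R * (Real.log R - Real.log D)) := by ring
        _ ≤ (ε' * A^2) * (R * (Real.log R - Real.log D)) :=
            mul_le_mul_of_nonneg_right h5 (mul_nonneg hR.le hL0.le)
        _ = (ε' * (Real.log R - Real.log D)) * (A^2 * R) := by ring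
        _ ≤ (ε' * (Real.log R - Real.log D)) * D^2 :=
            mul_le_mul_of_nonneg_left hd2 (mul_nonneg hε'0.le hL0.le)
        _ = ε' * (D * (Real.log R - Real.log D)) * D := by ring
    · have hd2' : R * Real.sqrt R ≤ D^2 := by
        have h1 : Real.sqrt (R^3) ≤ Real.sqrt (D^4) := Real.sqrt_le_sqrt (by linarith)
        have h2 : Real.sqrt (D^4) = D^2 := by
          rw [show D^4 = (D^2)^2 by ring, Real.sqrt_sq (by positivity)]
        have h3 : Real.sqrt (R^3) = R * Real.sqrt R := by
          rw [show R^3 = R^2 * R by ring, Real.sqrt_mul (by positivity) _, Real.sqrt_sq hR.le]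
        rw [h2, h3] at h1
        exact h1
      have hsqrt_t : Real.sqrt R = t^2 := by
        rw [htdef, sq, Real.mul_self_sqrt (Real.sqrt_nonneg _)]
      have h6 : (8:ℝ) ≤ ε' * t * Real.log 2 := by
        have h6a : (16:ℝ) ≤ ε' * t := by
          have := mul_le_mul_of_nonneg_left htA hε'0.le
          linarith
        have h6b : 16 * Real.log 2 ≤ ε' * t * Real.log 2 :=
          mul_le_mul_of_nonneg_right h6a hlog2
        nlinarith [log_two_ge_half]
      have hkey2 : 2 * Real.log R ≤ ε' * Real.sqrt R * Real.log 2 := by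
        rw [hsqrt_t]
        have c1 : 2 * Real.log R ≤ 8 * t := by linarith
        calc 2 * Real.log R ≤ 8 * t := c1
          _ = t * 8 := by ring
          _ ≤ t * (ε' * t * Real.log 2) := mul_le_mul_of_nonneg_left h6 ht0.le
          _ = ε' * t^2 * Real.log 2 := by ring
      calc 2 * R * Real.log R = R * (2 * Real.log R) := by ring
        _ ≤ R * (ε' * Real.sqrt R * Real.log 2) := mul_le_mul_of_nonneg_left hkey2 hR.le
        _ = (ε' * Real.log 2) * (R * Real.sqrt R) := by ring
        _ ≤ (ε' * Real.log 2) * D^2 :=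
            mul_le_mul_of_nonneg_left hd2' (mul_nonneg hε'0.le hlog2)
        _ = (ε' * D^2) * Real.log 2 := by ring
        _ ≤ (ε' * D^2) * (Real.log R - Real.log D) :=
            mul_le_mul_of_nonneg_left hL2 (by positivity)
        _ = ε' * (D * (Real.log R - Real.log D)) * D := by ring

set_option maxHeartbeats 2000000 in
private lemma part2 : ∀ ε : ℝ, 0 < ε → ∃ A : ℝ, ∀ r d : ℕ, 1 ≤ r → 2 * d ≤ r →
      A * Real.sqrt r ≤ (d : ℝ) →
      ((r.choose d : ℝ)) ^ (1 - ε) < (beta r d : ℝ) := by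
  intro ε hε
  obtain ⟨ε', hε'def⟩ : ∃ e : ℝ, e = min ε 1 := ⟨_, rfl⟩
  have hε'0 : 0 < ε' := hε'def ▸ lt_min hε one_pos
  have hε'1 : ε' ≤ 1 := hε'def ▸ min_le_right _ _
  have hε'ε : ε' ≤ ε := hε'def ▸ min_le_left _ _
  obtain ⟨A, hAdef⟩ : ∃ a : ℝ, a = 16/ε' + 16 := ⟨_, rfl⟩
  refine ⟨A, ?_⟩
  intro r d h1r h2d hAd
  have hA16 : 16 ≤ A := by
    have : 0 < 16/ε' := by positivity
    linarith [hAdef.ge, hAdef.le]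
  have hAε : 16 ≤ ε' * A := by
    have h1 : ε' * (16/ε') = 16 := by field_simp
    have h2 : ε' * A = 16 + ε' * 16 := by rw [hAdef, mul_add, h1]
    nlinarith
  have hsq1 : (1:ℝ) ≤ Real.sqrt r := by
    rw [show (1:ℝ) = Real.sqrt 1 by simp]
    exact Real.sqrt_le_sqrt (by exact_mod_cast h1r)
  have hsq0 : (0:ℝ) < Real.sqrt r := by linarith
  have hd₁ : Real.sqrt r < d := by
    have : Real.sqrt r < A * Real.sqrt r := by nlinarith
    linarith
  obtain ⟨hd3, hr6, hrdd⟩ := size_facts h1r hd₁ h2d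
  have hd0 : 0 < d := by omega
  have hdr : d < r := by omega
  have hp1 := part1 r d h1r hd₁ h2d
  have hR : (0:ℝ) < r := by positivity
  have hR1 : (1:ℝ) ≤ r := by exact_mod_cast h1r
  have hD : (0:ℝ) < d := by exact_mod_cast hd0
  have hD3 : (3:ℝ) ≤ d := by exact_mod_cast hd3
  have hDR : (d:ℝ) < r := by exact_mod_cast hdr
  have hMc : ((r-d : ℕ) : ℝ) = (r:ℝ) - d := by push_cast [Nat.cast_sub hdr.le]; ring
  have hM' : (0:ℝ) < (r:ℝ) - d := by linarith
  have hC1 : (1:ℝ) ≤ (r.choose d : ℝ) := by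
    exact_mod_cast Nat.one_le_iff_ne_zero.mpr (Nat.choose_pos hdr.le).ne'
  have hCpos : (0:ℝ) < (r.choose d : ℝ) := by linarith
  -- log C ≤ rH
  set rH := (r : ℝ) * (-(((d : ℝ) / r)) * Real.log ((d : ℝ) / r) -
      (1 - (d : ℝ) / r) * Real.log (1 - (d : ℝ) / r)) with hrHdef
  have hCle : (r.choose d : ℝ) ≤ Real.exp rH := by
    rw [hrHdef, exp_rH r d hd0 hdr]
    have hnat : (r.choose d : ℝ) * ((d:ℝ)^d * ((r-d:ℕ):ℝ)^(r-d)) ≤ (r:ℝ)^r := by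
      have := maxterm_le_rr (r := r) (d := d) hdr.le
      have hcast : ((r.choose d * d^d * (r-d)^(r-d) : ℕ) : ℝ) ≤ ((r^r : ℕ) : ℝ) := by
        exact_mod_cast this
      push_cast at hcast
      calc (r.choose d : ℝ) * ((d:ℝ)^d * ((r-d:ℕ):ℝ)^(r-d))
          = (r.choose d : ℝ) * (d:ℝ)^d * ((r-d:ℕ):ℝ)^(r-d) := by ring
        _ ≤ (r:ℝ)^r := by exact_mod_cast hcast
    have hden : (0:ℝ) < (d:ℝ)^d * ((r-d:ℕ):ℝ)^(r-d) := by
      have : (0:ℝ) < ((r-d:ℕ):ℝ) := by rw [hMc]; linarith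
      positivity
    rw [le_div_iff₀ hden]
    exact hnat
  have hlogC : Real.log (r.choose d : ℝ) ≤ rH := by
    have := Real.log_le_log hCpos hCle
    rwa [Real.log_exp] at this
  have hlogC0 : 0 ≤ Real.log (r.choose d : ℝ) := Real.log_nonneg hC1
  have hrH0 : 0 ≤ rH := le_trans hlogC0 hlogC
  -- rH ≥ d * (log r − log d)
  have hrHeq : rH = (r:ℝ) * Real.log r - ((d:ℝ) * Real.log d + ((r:ℝ)-(d:ℝ)) * Real.log ((r:ℝ)-(d:ℝ))) :=
    rH_eq r d hd0 hdr
  have hrH_ge : (d:ℝ) * (Real.log r - Real.log d) ≤ rH := by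
    rw [hrHeq]
    have h1 : Real.log ((r:ℝ) - d) ≤ Real.log r := Real.log_le_log hM' (by linarith)
    nlinarith [hM']
  -- the key analytic inequality (★): 2 * (r/d) * log r ≤ ε' * (d * (log r − log d))
  have hd2 : A^2 * (r:ℝ) ≤ (d:ℝ)^2 := by
    have hAsq : (A*Real.sqrt r) * (A*Real.sqrt r) ≤ (d:ℝ)*(d:ℝ) :=
      mul_le_mul hAd hAd (by positivity) hD.le
    have h0 : Real.sqrt r * Real.sqrt r = r := Real.mul_self_sqrt hR.le
    have heq : (A*Real.sqrt r) * (A*Real.sqrt r) = A^2 * (r:ℝ) := by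
      calc (A*Real.sqrt r) * (A*Real.sqrt r) = A^2 * (Real.sqrt r * Real.sqrt r) := by ring
        _ = A^2 * (r:ℝ) := by rw [h0]
    rw [← heq]
    calc (A*Real.sqrt r) * (A*Real.sqrt r) ≤ (d:ℝ)*(d:ℝ) := hAsq
      _ = (d:ℝ)^2 := by ring
  have hstar : 2 * ((r:ℝ)/(d:ℝ)) * Real.log r ≤ ε' * ((d:ℝ) * (Real.log r - Real.log d)) := by
    have hrw : 2 * ((r:ℝ)/(d:ℝ)) * Real.log r = (2 * (r:ℝ) * Real.log r)/(d:ℝ) := by ring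
    rw [hrw, div_le_iff₀ hD]
    exact star_core ε' A (r:ℝ) (d:ℝ) hε'0 hA16 hAε hR1 (by linarith) (by exact_mod_cast h2d) hd2
  -- assemble
  have hmain : (1 - ε) * Real.log (r.choose d : ℝ) ≤ rH - 2 * ((r:ℝ)/(d:ℝ)) * Real.log r := by
    have h1 : (1 - ε) * Real.log (r.choose d : ℝ) ≤ (1 - ε') * Real.log (r.choose d : ℝ) := by
      apply mul_le_mul_of_nonneg_right _ hlogC0
      linarith
    have h2 : (1 - ε') * Real.log (r.choose d : ℝ) ≤ (1 - ε') * rH :=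
      mul_le_mul_of_nonneg_left hlogC (by linarith)
    have h3 : 2 * ((r:ℝ)/(d:ℝ)) * Real.log r ≤ ε' * rH :=
      le_trans hstar (mul_le_mul_of_nonneg_left hrH_ge hε'0.le)
    nlinarith [h1, h2, h3]
  calc ((r.choose d : ℝ)) ^ (1 - ε) = Real.exp (Real.log (r.choose d : ℝ) * (1 - ε)) := by
        rw [Real.rpow_def_of_pos hCpos]
    _ ≤ Real.exp (rH - 2 * ((r:ℝ)/(d:ℝ)) * Real.log r) := by
        apply Real.exp_le_exp.mpr
        rw [mul_comm]
        exact hmain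
    _ < (beta r d : ℝ) := hp1

end BetaProof

theorem beta_entropy_lower (r d : ℕ) (hr : 1 ≤ r)
    (hd₁ : Real.sqrt r < d) (hd₂ : 2 * d ≤ r) :
    (Real.exp ((r : ℝ) *
        (-(((d : ℝ) / r)) * Real.log ((d : ℝ) / r) -
          (1 - (d : ℝ) / r) * Real.log (1 - (d : ℝ) / r)) -
      2 * ((r : ℝ) / d) * Real.log r) < (beta r d : ℝ)) ∧
    ∀ ε : ℝ, 0 < ε → ∃ A : ℝ, ∀ r' d' : ℕ, 1 ≤ r' → 2 * d' ≤ r' →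
      A * Real.sqrt r' ≤ (d' : ℝ) →
      ((r'.choose d' : ℝ)) ^ (1 - ε) < (beta r' d' : ℝ) :=
  ⟨part1 r d hr hd₁ hd₂, part2⟩
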